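/- Let (B,S) be an exact category with enough S-injectives such that every S-injective object is S-projective. Then the shift functor T on the stable category B/S (the quotient by the ideal of morphisms factoring through S-injectives) is fully faithful. -/

import Mathlib

open CategoryTheory Limits

attribute [local instance] CategoryTheory.Limits.hasBinaryBiproducts_of_finite_biproducts

universe v u

variable (C : Type u) [Category.{v} C]

/-- A sextuple `A ⟶ B ⟶ C ⟶ TA` in a category with an endofunctor `T`. -/
structure RightTriangle (T : C ⥤ C) where
  obj₁ : C
  obj₂ : C
  obj₃ : C
  mor₁ : obj₁ ⟶ obj₂
  mor₂ : obj₂ ⟶ obj₃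
  mor₃ : obj₃ ⟶ T.obj obj₁

variable {C}

/-- An isomorphism of sextuples. -/
def RightTriangle.Iso {T : C ⥤ C} (t t' : RightTriangle C T) : Prop :=
  ∃ (a : t.obj₁ ≅ t'.obj₁) (b : t.obj₂ ≅ t'.obj₂) (c : t.obj₃ ≅ t'.obj₃),
    t.mor₁ ≫ b.hom = a.hom ≫ t'.mor₁ ∧
    t.mor₂ ≫ c.hom = b.hom ≫ t'.mor₂ ∧
    t.mor₃ ≫ T.map a.hom = c.hom ≫ t'.mor₃

open ZeroObject in
/-- A right triangulated category structure on an additive category `C`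
with shift endofunctor `T`, following Assem–Beligiannis–Marmaridis:
axioms TR(0)-TR(5). -/
structure RightTriangulated [Preadditive C] [HasZeroObject C] [HasFiniteBiproducts C]
    (T : C ⥤ C) where
  shift_additive : T.Additive
  dist : Set (RightTriangle C T)
  /-- TR(0): closed under isomorphisms -/
  tr0 : ∀ t ∈ dist, ∀ t', RightTriangle.Iso t t' → t' ∈ dist
  /-- TR(1): `0 ⟶ A ⟶ A ⟶ 0` is a right triangle -/
  tr1 : ∀ A : C, (⟨0, A, A, 0, 𝟙 A, 0⟩ : RightTriangle C T) ∈ dist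
  /-- TR(2): every morphism extends to a right triangle -/
  tr2 : ∀ {A B : C} (f : A ⟶ B), ∃ (Z : C) (g : B ⟶ Z) (h : Z ⟶ T.obj A),
    (⟨A, B, Z, f, g, h⟩ : RightTriangle C T) ∈ dist
  /-- TR(3): rotation -/
  tr3 : ∀ t ∈ dist,
    (⟨t.obj₂, t.obj₃, T.obj t.obj₁, t.mor₂, t.mor₃, -T.map t.mor₁⟩ : RightTriangle C T) ∈ dist
  /-- TR(4): completion of commutative squares to morphisms of right triangles -/
  tr4 : ∀ t ∈ dist, ∀ t' ∈ dist, ∀ (a : t.obj₁ ⟶ t'.obj₁) (b : t.obj₂ ⟶ t'.obj₂),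
    t.mor₁ ≫ b = a ≫ t'.mor₁ →
    ∃ c : t.obj₃ ⟶ t'.obj₃,
      t.mor₂ ≫ c = b ≫ t'.mor₂ ∧ t.mor₃ ≫ T.map a = c ≫ t'.mor₃
  /-- TR(5): the octahedral axiom -/
  tr5 : ∀ {X Y Z U V W : C} (a : X ⟶ Y) (b : Y ⟶ Z) (c : Z ⟶ T.obj X)
    (d : Y ⟶ U) (e : U ⟶ V) (f : V ⟶ T.obj Y) (g : U ⟶ W) (h : W ⟶ T.obj X),
    (⟨X, Y, Z, a, b, c⟩ : RightTriangle C T) ∈ dist →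
    (⟨Y, U, V, d, e, f⟩ : RightTriangle C T) ∈ dist →
    (⟨X, U, W, a ≫ d, g, h⟩ : RightTriangle C T) ∈ dist →
    ∃ (l : Z ⟶ W) (i : W ⟶ V),
      b ≫ l = d ≫ g ∧ l ≫ h = c ∧ g ≫ i = e ∧ i ≫ f = h ≫ T.map a ∧
      (⟨Z, W, V, l, i, f ≫ T.map b⟩ : RightTriangle C T) ∈ dist

/-- Assumption 2.10: the rotation axiom can be reversed. -/
def Assumption210 [Preadditive C] [HasZeroObject C] [HasFiniteBiproducts C]
    {T : C ⥤ C} (rt : RightTriangulated T) : Prop :=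
  ∀ {A B Z : C} (f : A ⟶ B) (g : B ⟶ Z) (h : Z ⟶ T.obj A),
    (⟨B, Z, T.obj A, g, h, -T.map f⟩ : RightTriangle C T) ∈ rt.dist →
    (⟨A, B, Z, f, g, h⟩ : RightTriangle C T) ∈ rt.dist

/-- A morphism factors through an object of `S`. -/
def FactorsThru (S : Set C) {X Y : C} (f : X ⟶ Y) : Prop :=
  ∃ (D : C) (_ : D ∈ S) (u : X ⟶ D) (v : D ⟶ Y), u ≫ v = f

/-- `g : X ⟶ Y` is `S`-epic. -/
def SEpic (S : Set C) {X Y : C} (g : X ⟶ Y) : Prop :=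
  ∀ D ∈ S, ∀ u : D ⟶ Y, ∃ v : D ⟶ X, v ≫ g = u

/-- `f : X ⟶ Y` is `S`-monic. -/
def SMonic (S : Set C) {X Y : C} (f : X ⟶ Y) : Prop :=
  ∀ D ∈ S, ∀ u : X ⟶ D, ∃ v : Y ⟶ D, f ≫ v = u

/-- iterate of an endofunctor. -/
def iterFun (T : C ⥤ C) : ℕ → (C ⥤ C)
  | 0 => 𝟭 C
  | n + 1 => iterFun T n ⋙ T

/-- `S` is factor-through-epic: every `f ∈ [Tⁿ S](TX, TY)` with `n > 0` is of the
form `T f'` for some `f' ∈ [Tⁿ⁻¹ S](X, Y)`. -/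
def FactorThroughEpic (T : C ⥤ C) (S : Set C) : Prop :=
  ∀ (n : ℕ) (X Y : C) (f : T.obj X ⟶ T.obj Y),
    FactorsThru ((iterFun T (n + 1)).obj '' S) f →
    ∃ f' : X ⟶ Y, FactorsThru ((iterFun T n).obj '' S) f' ∧ T.map f' = f

/-- A subcategory (given by a set of objects) closed under isomorphisms,
finite direct sums and direct summands. -/
def IsSubcat [Preadditive C] [HasFiniteBiproducts C] (S : Set C) : Prop :=
  (∀ {X Y : C}, (X ≅ Y) → X ∈ S → Y ∈ S) ∧
  (∀ {X Y : C}, X ∈ S → Y ∈ S → (X ⊞ Y) ∈ S) ∧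
  (∀ {X Y : C} (s : Y ⟶ X) (r : X ⟶ Y), s ≫ r = 𝟙 Y → X ∈ S → Y ∈ S)

section Mutation

variable [Preadditive C] [HasZeroObject C] [HasFiniteBiproducts C]
  {T : C ⥤ C} (rt : RightTriangulated T)

/-- `μ(𝒵; 𝒟)`: objects `X` that lie in `𝒟` or are the left end of a right triangle
`X ⟶ D ⟶ Y ⟶ TX` with `Y ∈ 𝒵`, `D ∈ 𝒟`, the first map a left `𝒟`-approximation and
the second a right `𝒟`-approximation. -/
def muSet (𝒵 𝒟 : Set C) : Set C :=
  {X | X ∈ 𝒟 ∨ ∃ (D Y : C) (f : X ⟶ D) (g : D ⟶ Y) (h : Y ⟶ T.obj X),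
    (⟨X, D, Y, f, g, h⟩ : RightTriangle C T) ∈ rt.dist ∧
    D ∈ 𝒟 ∧ Y ∈ 𝒵 ∧ SMonic 𝒟 f ∧ SEpic 𝒟 g}

/-- `μ⁻¹(𝒳; 𝒟)`: objects `Y` that lie in `𝒟` or are the third term of a right triangle
`X ⟶ D ⟶ Y ⟶ TX` with `X ∈ 𝒳`, `D ∈ 𝒟`, the maps being left/right `𝒟`-approximations. -/
def muInvSet (𝒳 𝒟 : Set C) : Set C :=
  {Y | Y ∈ 𝒟 ∨ ∃ (X D : C) (f : X ⟶ D) (g : D ⟶ Y) (h : Y ⟶ T.obj X),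
    (⟨X, D, Y, f, g, h⟩ : RightTriangle C T) ∈ rt.dist ∧
    X ∈ 𝒳 ∧ D ∈ 𝒟 ∧ SMonic 𝒟 f ∧ SEpic 𝒟 g}

/-- `(𝒳, 𝒴)` is a `𝒟`-mutation pair. -/
def IsMutationPair (𝒳 𝒴 𝒟 : Set C) : Prop :=
  muInvSet rt 𝒳 𝒟 = 𝒴 ∧ muSet rt 𝒴 𝒟 = 𝒳

/-- `𝒵` is extension-closed. -/
def ExtClosed (𝒵 : Set C) : Prop :=
  ∀ t ∈ rt.dist, t.obj₁ ∈ 𝒵 → t.obj₃ ∈ 𝒵 → t.obj₂ ∈ 𝒵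

end Mutation

/-! ## Exact categories and their stable categories -/

section ExactCat

variable (B : Type u) [Category.{v} B] [Preadditive B] [HasFiniteBiproducts B]

/-- A kernel–cokernel pair `0 → X → Y → Z → 0` in a preadditive category. -/
structure AdmSES where
  X : B
  Y : B
  Z : B
  i : X ⟶ Y
  p : Y ⟶ Z
  zero : i ≫ p = 0
  isKernel : Nonempty (IsLimit (KernelFork.ofι i zero))
  isCokernel : Nonempty (IsColimit (CokernelCofork.ofπ p zero))

variable {B}

/-- `f` is an admissible monomorphism for the class `S`. -/
def AdmMono (S : Set (AdmSES B)) {X Y : B} (f : X ⟶ Y) : Prop :=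
  ∃ (Z : B) (p : Y ⟶ Z) (zero : f ≫ p = 0)
    (hk : Nonempty (IsLimit (KernelFork.ofι f zero)))
    (hc : Nonempty (IsColimit (CokernelCofork.ofπ p zero))),
    (⟨X, Y, Z, f, p, zero, hk, hc⟩ : AdmSES B) ∈ S

/-- `p` is an admissible epimorphism for the class `S`. -/
def AdmEpi (S : Set (AdmSES B)) {Y Z : B} (p : Y ⟶ Z) : Prop :=
  ∃ (X : B) (i : X ⟶ Y) (zero : i ≫ p = 0)
    (hk : Nonempty (IsLimit (KernelFork.ofι i zero)))
    (hc : Nonempty (IsColimit (CokernelCofork.ofπ p zero))),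
    (⟨X, Y, Z, i, p, zero, hk, hc⟩ : AdmSES B) ∈ S

/-- Quillen's axioms for an exact structure `S` on an additive category. -/
structure IsExactStructure (S : Set (AdmSES B)) : Prop where
  iso_closed : ∀ s ∈ S, ∀ (s' : AdmSES B) (eX : s.X ≅ s'.X) (eY : s.Y ≅ s'.Y)
    (eZ : s.Z ≅ s'.Z), s.i ≫ eY.hom = eX.hom ≫ s'.i → s.p ≫ eZ.hom = eY.hom ≫ s'.p →
    s' ∈ S
  split_mem : ∀ A A' : B, AdmMono S (biprod.inl : A ⟶ A ⊞ A')
  id_mono : ∀ A : B, AdmMono S (𝟙 A)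
  id_epi : ∀ A : B, AdmEpi S (𝟙 A)
  mono_comp : ∀ {X Y Z : B} (f : X ⟶ Y) (g : Y ⟶ Z),
    AdmMono S f → AdmMono S g → AdmMono S (f ≫ g)
  epi_comp : ∀ {X Y Z : B} (f : X ⟶ Y) (g : Y ⟶ Z),
    AdmEpi S f → AdmEpi S g → AdmEpi S (f ≫ g)
  mono_pushout : ∀ {X Y A : B} (f : X ⟶ Y), AdmMono S f → ∀ (g : X ⟶ A),
    ∃ (P : B) (i' : A ⟶ P) (j : Y ⟶ P), IsPushout f g j i' ∧ AdmMono S i'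
  epi_pullback : ∀ {Y Z A : B} (p : Y ⟶ Z), AdmEpi S p → ∀ (g : A ⟶ Z),
    ∃ (P : B) (p' : P ⟶ A) (j : P ⟶ Y), IsPullback j p' p g ∧ AdmEpi S p'

/-- `I` is `S`-injective. -/
def SInj (S : Set (AdmSES B)) (I : B) : Prop :=
  ∀ s ∈ S, ∀ f : s.X ⟶ I, ∃ g : s.Y ⟶ I, s.i ≫ g = f

/-- `P` is `S`-projective. -/
def SProj (S : Set (AdmSES B)) (P : B) : Prop :=
  ∀ s ∈ S, ∀ f : P ⟶ s.Z, ∃ g : P ⟶ s.Y, g ≫ s.p = f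

/-- The stable relation: two morphisms are identified iff their difference
factors through an `S`-injective object. -/
def injRel (S : Set (AdmSES B)) : HomRel B :=
  fun {X Y} (f g : X ⟶ Y) => FactorsThru {I | SInj S I} (f - g)

/-- The stable category `B/S`. -/
abbrev StMod (S : Set (AdmSES B)) := CategoryTheory.Quotient (injRel S)

/-- The quotient functor `B ⟶ B/S`. -/
abbrev stquot (S : Set (AdmSES B)) : B ⥤ StMod S :=
  Quotient.functor (injRel S)

end ExactCat

section Aux

variable {B : Type u} [Category.{v} B] [Preadditive B] [HasFiniteBiproducts B]

lemma sinj_biprod (S : Set (AdmSES B)) {D D' : B} (hD : SInj S D) (hD' : SInj S D') :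
    SInj S (D ⊞ D') := by
  intro s hs f
  obtain ⟨g₁, hg₁⟩ := hD s hs (f ≫ biprod.fst)
  obtain ⟨g₂, hg₂⟩ := hD' s hs (f ≫ biprod.snd)
  refine ⟨biprod.lift g₁ g₂, ?_⟩
  apply biprod.hom_ext <;> simp [hg₁, hg₂]

lemma injRel_congruence (S : Set (AdmSES B)) (I : B → B) (hinj : ∀ X : B, SInj S (I X)) :
    Congruence (injRel S) where
  equivalence {X Y} :=
    { refl := fun f => ⟨I X, hinj X, 0, 0, by simp⟩
      symm := fun {f g} h => by
        obtain ⟨D, hD, u, v, huv⟩ := h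
        exact ⟨D, hD, -u, v, by rw [Preadditive.neg_comp, huv]; abel⟩
      trans := fun {f g h} h₁ h₂ => by
        obtain ⟨D, hD, u, v, huv⟩ := h₁
        obtain ⟨D', hD', u', v', huv'⟩ := h₂
        refine ⟨D ⊞ D', sinj_biprod S hD hD', biprod.lift u u', biprod.desc v v', ?_⟩
        rw [biprod.lift_desc, huv, huv']; abel }
  comp_left {X Y Z} f {g g'} h := by
    obtain ⟨D, hD, u, v, huv⟩ := h
    exact ⟨D, hD, f ≫ u, v, by rw [Category.assoc, huv, Preadditive.comp_sub]⟩
  comp_right {X Y Z} {f f'} g h := by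
    obtain ⟨D, hD, u, v, huv⟩ := h
    exact ⟨D, hD, u, v ≫ g, by rw [← Category.assoc, huv, Preadditive.sub_comp]⟩

end Aux

/-- The Claim in Example 4 (part 1): let `(B, S)` be an exact category with enough
`S`-injectives such that every `S`-injective is `S`-projective. Then the shift
functor `T` on the stable category `B/S` is fully faithful. -/
theorem stable_shift_fullyFaithful {B : Type u} [Category.{v} B] [Preadditive B]
    [HasFiniteBiproducts B]
    (S : Set (AdmSES B)) (hS : IsExactStructure S)
    (I Tob : B → B) (μ : ∀ X : B, X ⟶ I X) (π : ∀ X : B, I X ⟶ Tob X)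
    (hses : ∀ X : B, ∃ (zero : μ X ≫ π X = 0)
      (hk : Nonempty (IsLimit (KernelFork.ofι (μ X) zero)))
      (hc : Nonempty (IsColimit (CokernelCofork.ofπ (π X) zero))),
      (⟨X, I X, Tob X, μ X, π X, zero, hk, hc⟩ : AdmSES B) ∈ S)
    (hinj : ∀ X : B, SInj S (I X))
    (hip : ∀ J : B, SInj S J → SProj S J)
    (T' : StMod S ⥤ StMod S)
    (hobj : ∀ X : B, T'.obj ((stquot S).obj X) = (stquot S).obj (Tob X))
    (hmap : ∀ (X Y : B) (f : X ⟶ Y) (g : I X ⟶ I Y) (f' : Tob X ⟶ Tob Y),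
      μ X ≫ g = f ≫ μ Y → π X ≫ f' = g ≫ π Y →
      T'.map ((stquot S).map f)
        = eqToHom (hobj X) ≫ (stquot S).map f' ≫ eqToHom (hobj Y).symm) :
    T'.Full ∧ T'.Faithful := by
  haveI : Congruence (injRel S) := injRel_congruence S I hinj
  constructor
  · -- Fullness
    refine ⟨fun {A B'} φ => ?_⟩
    obtain ⟨X⟩ := A
    obtain ⟨Y⟩ := B'
    obtain ⟨zeroX, ⟨hkX⟩, ⟨hcX⟩, memX⟩ := hses X
    obtain ⟨zeroY, ⟨hkY⟩, ⟨hcY⟩, memY⟩ := hses Y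
    -- transport φ to a morphism between quotient objects
    obtain ⟨f', hf'⟩ := (stquot S).map_surjective
      (eqToHom (hobj X).symm ≫ φ ≫ eqToHom (hobj Y))
    -- lift π X ≫ f' along π Y using S-projectivity of I X
    obtain ⟨g, hg⟩ := hip (I X) (hinj X) _ memY (π X ≫ f')
    -- obtain f : X ⟶ Y via the kernel property of μ Y
    obtain ⟨f, hf⟩ := KernelFork.IsLimit.lift' hkY (μ X ≫ g)
      (by rw [Category.assoc, hg, ← Category.assoc, zeroX, zero_comp])
    refine ⟨(stquot S).map f, ?_⟩
    rw [hmap X Y f g f' hf.symm hg.symm, hf']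
    simp
  · -- Faithfulness
    refine ⟨fun {A B'} f g h => ?_⟩
    obtain ⟨X⟩ := A
    obtain ⟨Y⟩ := B'
    obtain ⟨zeroX, ⟨hkX⟩, ⟨hcX⟩, memX⟩ := hses X
    obtain ⟨zeroY, ⟨hkY⟩, ⟨hcY⟩, memY⟩ := hses Y
    obtain ⟨f₀, rfl⟩ := (stquot S).map_surjective f
    obtain ⟨g₀, rfl⟩ := (stquot S).map_surjective g
    -- lift f₀ and g₀ to the injective resolutions
    obtain ⟨gf, hgf⟩ := hinj Y _ memX (f₀ ≫ μ Y)
    obtain ⟨gg, hgg⟩ := hinj Y _ memX (g₀ ≫ μ Y)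
    obtain ⟨fT, hfT⟩ := CokernelCofork.IsColimit.desc' hcX (gf ≫ π Y)
      (by rw [← Category.assoc, hgf, Category.assoc, zeroY, comp_zero])
    obtain ⟨gT, hgT⟩ := CokernelCofork.IsColimit.desc' hcX (gg ≫ π Y)
      (by rw [← Category.assoc, hgg, Category.assoc, zeroY, comp_zero])
    have hfTπ : π X ≫ fT = gf ≫ π Y := hfT
    have hgTπ : π X ≫ gT = gg ≫ π Y := hgT
    have hfm := hmap X Y f₀ gf fT hgf hfTπ
    have hgm := hmap X Y g₀ gg gT hgg hgTπ
    rw [hfm, hgm] at h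
    have h' : (stquot S).map fT = (stquot S).map gT := by
      have h2 := congrArg
        (fun m => eqToHom (hobj X).symm ≫ m ≫ eqToHom (hobj Y)) h
      simpa using h2
    rw [Quotient.functor_map_eq_iff] at h'
    obtain ⟨J, hJ, u, v, huv⟩ := h'
    -- lift v along π Y using S-projectivity of J
    obtain ⟨w, hw⟩ := hip J hJ _ memY v
    have hw' : w ≫ π Y = v := hw
    -- factor through the kernel μ Y
    obtain ⟨k, hk⟩ := KernelFork.IsLimit.lift' hkY ((gf - gg) - π X ≫ u ≫ w)
      (by
        simp only [Preadditive.sub_comp, Category.assoc, hw', ← hfTπ, ← hgTπ,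
          ← Preadditive.comp_sub, huv]
        simp)
    let k' : I X ⟶ Y := k
    have hk' : k' ≫ μ Y = (gf - gg) - π X ≫ u ≫ w := hk
    haveI : Mono (μ Y) := mono_of_isLimit_fork hkY
    have key : f₀ - g₀ = μ X ≫ k' := by
      have hzero : (f₀ - g₀ - μ X ≫ k') ≫ μ Y = 0 := by
        have hμπ : μ X ≫ π X ≫ u ≫ w = 0 := by
          rw [← Category.assoc, zeroX, zero_comp]
        simp only [Preadditive.sub_comp, Category.assoc, ← hgf, ← hgg, hk',
          Preadditive.comp_sub, hμπ]
        abel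
      have h3 := (cancel_mono (μ Y)).mp (by rw [hzero, zero_comp] :
        (f₀ - g₀ - μ X ≫ k') ≫ μ Y = 0 ≫ μ Y)
      rw [sub_eq_zero] at h3
      rw [h3]
    rw [Quotient.functor_map_eq_iff]
    exact ⟨I X, hinj X, μ X, k', key.symm⟩
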